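/- There exists a constant C > 0 such that for all sufficiently large n, σ(n) ≤ C · n · log log n. -/

import Mathlib

open Finset

noncomputable def mertS (n : ℕ) : ℝ := ∑ p ∈ (n+1).primesBelow, Real.log p / p
noncomputable def mertT (n : ℕ) : ℝ := ∑ p ∈ (n+1).primesBelow, (1 : ℝ) / p

lemma telescope (g : ℕ → ℝ) (a b : ℕ) (hab : a ≤ b) :
    ∑ m ∈ Finset.Ico a b, (g m - g (m+1)) = g a - g b := by
  induction b, hab using Nat.le_induction with
  | base => simp
  | succ n hn ih => rw [Finset.sum_Ico_succ_top hn, ih]; ring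

lemma primesBelow_prime {p n : ℕ} (h : p ∈ n.primesBelow) : p.Prime :=
  Nat.prime_of_mem_primesBelow h

lemma theta_le (n : ℕ) : ∑ p ∈ (n+1).primesBelow, Real.log p ≤ n * Real.log 4 := by
  have hpos : 0 < primorial n := by
    apply Finset.prod_pos
    intro p hp
    simp only [Finset.mem_filter] at hp
    exact hp.2.pos
  have h1 : (primorial n : ℝ) ≤ (4:ℝ)^n := by exact_mod_cast primorial_le_4_pow n
  have h2 : Real.log (primorial n) ≤ n * Real.log 4 := by
    calc Real.log (primorial n) ≤ Real.log ((4:ℝ)^n) :=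
          Real.log_le_log (by exact_mod_cast hpos) h1
    _ = n * Real.log 4 := Real.log_pow 4 n
  have h3 : Real.log (primorial n) = ∑ p ∈ (n+1).primesBelow, Real.log p := by
    have : (primorial n : ℝ) = ∏ p ∈ (n+1).primesBelow, (p:ℝ) := by
      rw [primorial]; push_cast; rfl
    rw [this, Real.log_prod]
    intro p hp
    exact_mod_cast (primesBelow_prime hp).pos.ne'
  rw [h3] at h2
  exact h2

lemma prod_pp_dvd (N : ℕ) (s : Finset ℕ) (f : ℕ → ℕ)
    (hs : ∀ p ∈ s, p.Prime) (h : ∀ p ∈ s, p ^ f p ∣ N) : (∏ p ∈ s, p ^ f p) ∣ N := by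
  classical
  induction s using Finset.induction_on with
  | empty => simp
  | @insert a s ha ih =>
      rw [Finset.prod_insert ha]
      have hcop : Nat.Coprime (a ^ f a) (∏ p ∈ s, p ^ f p) := by
        apply Nat.Coprime.pow_left
        apply Nat.Coprime.prod_right
        intro q hq
        exact ((Nat.coprime_primes (hs a (Finset.mem_insert_self a s))
          (hs q (Finset.mem_insert_of_mem hq))).mpr
          (by rintro rfl; exact ha hq)).pow_right _
      exact hcop.mul_dvd_of_dvd_of_dvd (h a (Finset.mem_insert_self a s))
        (ih (fun p hp => hs p (Finset.mem_insert_of_mem hp))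
            (fun p hp => h p (Finset.mem_insert_of_mem hp)))

lemma mertens1 (n : ℕ) (hn : 1 ≤ n) : mertS n ≤ Real.log n + Real.log 4 := by
  have key : ∀ p ∈ (n+1).primesBelow, p ^ (n / p) ∣ Nat.factorial n := by
    intro p hp
    have hple : p ≤ n := Nat.lt_succ_iff.mp (Nat.lt_of_mem_primesBelow hp)
    have hpp := primesBelow_prime hp
    haveI : Fact p.Prime := ⟨hpp⟩
    rw [padicValNat_dvd_iff_le (Nat.factorial_ne_zero n),
      padicValNat_factorial (b := Nat.log p n + 1) (Nat.lt_succ_self _)]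
    have h1 : 1 ∈ Finset.Ico 1 (Nat.log p n + 1) := by
      simp only [Finset.mem_Ico]
      exact ⟨le_refl 1, Nat.succ_lt_succ (Nat.log_pos hpp.one_lt hple)⟩
    calc n / p = n / p ^ 1 := by rw [pow_one]
    _ ≤ ∑ i ∈ Finset.Ico 1 (Nat.log p n + 1), n / p ^ i :=
      Finset.single_le_sum (f := fun i => n / p ^ i) (fun i _ => Nat.zero_le _) h1
  have hdvd : (∏ p ∈ (n+1).primesBelow, p ^ (n / p)) ∣ Nat.factorial n :=
    prod_pp_dvd _ _ _ (fun p hp => primesBelow_prime hp) key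
  have hle : (∏ p ∈ (n+1).primesBelow, p ^ (n / p)) ≤ Nat.factorial n :=
    Nat.le_of_dvd (Nat.factorial_pos n) hdvd
  have hlog : ∑ p ∈ (n+1).primesBelow, ((n / p : ℕ) : ℝ) * Real.log p ≤ n * Real.log n := by
    have h1 : ((∏ p ∈ (n+1).primesBelow, p ^ (n / p) : ℕ) : ℝ) ≤ ((n:ℝ))^n := by
      calc ((∏ p ∈ (n+1).primesBelow, p ^ (n / p) : ℕ) : ℝ) ≤ ((Nat.factorial n : ℕ) : ℝ) := by
            exact_mod_cast hle
      _ ≤ ((n:ℝ))^n := by exact_mod_cast Nat.factorial_le_pow n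
    have h2 : Real.log ((∏ p ∈ (n+1).primesBelow, p ^ (n / p) : ℕ) : ℝ)
        = ∑ p ∈ (n+1).primesBelow, ((n / p : ℕ) : ℝ) * Real.log p := by
      push_cast
      rw [Real.log_prod]
      · refine Finset.sum_congr rfl fun p hp => ?_
        rw [Real.log_pow]
      · intro p hp
        exact pow_ne_zero _ (by exact_mod_cast (primesBelow_prime hp).pos.ne')
    have hprodpos : (0:ℝ) < ((∏ p ∈ (n+1).primesBelow, p ^ (n / p) : ℕ) : ℝ) := by
      have : 0 < ∏ p ∈ (n+1).primesBelow, p ^ (n / p) :=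
        Finset.prod_pos fun p hp => pow_pos (primesBelow_prime hp).pos _
      exact_mod_cast this
    calc ∑ p ∈ (n+1).primesBelow, ((n / p : ℕ) : ℝ) * Real.log p
        = Real.log ((∏ p ∈ (n+1).primesBelow, p ^ (n / p) : ℕ) : ℝ) := h2.symm
    _ ≤ Real.log ((n:ℝ)^n) := Real.log_le_log hprodpos h1
    _ = n * Real.log n := Real.log_pow n n
  have hnpos : (0:ℝ) < n := by exact_mod_cast hn
  have hmain : (n:ℝ) * mertS n ≤ n * Real.log n + n * Real.log 4 := by
    rw [mertS, Finset.mul_sum]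
    calc ∑ p ∈ (n+1).primesBelow, (n:ℝ) * (Real.log p / p)
        ≤ ∑ p ∈ (n+1).primesBelow, (((n / p : ℕ) : ℝ) * Real.log p + Real.log p) := by
          apply Finset.sum_le_sum
          intro p hp
          have hpp := primesBelow_prime hp
          have hppos : (0:ℝ) < p := by exact_mod_cast hpp.pos
          have hlogp : (0:ℝ) ≤ Real.log p := by
            apply Real.log_nonneg; exact_mod_cast hpp.one_lt.le
          have hdiv : (n:ℝ) / p ≤ ((n / p : ℕ) : ℝ) + 1 := by
            rw [div_le_iff₀ hppos]
            have h0 := Nat.lt_mul_div_succ n hpp.pos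
            have h0' : (n:ℝ) < p * (((n / p : ℕ) : ℝ) + 1) := by exact_mod_cast h0
            nlinarith
          calc (n:ℝ) * (Real.log p / p) = ((n:ℝ)/p) * Real.log p := by ring
          _ ≤ (((n / p : ℕ) : ℝ) + 1) * Real.log p :=
              mul_le_mul_of_nonneg_right hdiv hlogp
          _ = ((n / p : ℕ) : ℝ) * Real.log p + Real.log p := by ring
    _ = (∑ p ∈ (n+1).primesBelow, ((n / p : ℕ) : ℝ) * Real.log p)
          + ∑ p ∈ (n+1).primesBelow, Real.log p := Finset.sum_add_distrib
    _ ≤ n * Real.log n + n * Real.log 4 := add_le_add hlog (theta_le n)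
  have := (mul_le_mul_iff_right₀ hnpos).mp (by linarith [hmain] :
    (n:ℝ) * mertS n ≤ (n:ℝ) * (Real.log n + Real.log 4))
  exact this

lemma mertS_nonneg (n : ℕ) : 0 ≤ mertS n := by
  apply Finset.sum_nonneg
  intro p hp
  have hpp := primesBelow_prime hp
  apply div_nonneg
  · apply Real.log_nonneg; exact_mod_cast hpp.one_lt.le
  · exact_mod_cast hpp.pos.le

lemma abel_identity (n : ℕ) (hn : 2 ≤ n) :
    mertT n = mertS n / Real.log n
      + ∑ m ∈ Finset.Ico 2 n, mertS m * (1 / Real.log m - 1 / Real.log (m+1)) := by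
  induction n, hn using Nat.le_induction with
  | base =>
      have h3 : Nat.primesBelow 3 = {2} := by decide
      have hT : mertT 2 = 1/2 := by rw [mertT]; norm_num [h3]
      have hS : mertS 2 = Real.log 2 / 2 := by rw [mertS]; norm_num [h3]
      rw [hT, hS]
      have : Real.log 2 ≠ 0 := by positivity
      rw [show Finset.Ico 2 2 = ∅ from rfl]
      push_cast
      field_simp
      simp
  | succ n hn ih =>
      have hlog1 : Real.log ((n:ℝ)+1) ≠ 0 := by
        have h2n : (2:ℝ) ≤ n := by exact_mod_cast hn
        exact ne_of_gt (Real.log_pos (by linarith))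
      have hstepT : mertT (n+1) = mertT n
          + (if (n+1).Prime then 1/((n:ℝ)+1) else 0) := by
        rw [mertT, mertT, show n+1+1 = (n+1)+1 from rfl, Nat.primesBelow_succ]
        by_cases hp : (n+1).Prime
        · rw [if_pos hp, if_pos hp, Finset.sum_insert]
          · push_cast; ring
          · intro hmem
            exact absurd (Nat.lt_of_mem_primesBelow hmem) (lt_irrefl _)
        · rw [if_neg hp, if_neg hp, add_zero]
      have hstepS : mertS (n+1) = mertS n
          + (if (n+1).Prime then Real.log ((n:ℝ)+1)/((n:ℝ)+1) else 0) := by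
        rw [mertS, mertS, show n+1+1 = (n+1)+1 from rfl, Nat.primesBelow_succ]
        by_cases hp : (n+1).Prime
        · rw [if_pos hp, if_pos hp, Finset.sum_insert]
          · push_cast; ring
          · intro hmem
            exact absurd (Nat.lt_of_mem_primesBelow hmem) (lt_irrefl _)
        · rw [if_neg hp, if_neg hp, add_zero]
      rw [Finset.sum_Ico_succ_top hn, hstepT, hstepS, ih]
      push_cast
      by_cases hp : (n+1).Prime
      · rw [if_pos hp, if_pos hp]
        field_simp
        ring
      · rw [if_neg hp, if_neg hp]
        field_simp
        ring

noncomputable def mertB : ℝ :=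
  1 + 2 * (Real.log 4 / Real.log 2) - Real.log (Real.log 2)

lemma mertens2 (n : ℕ) (hn : 2 ≤ n) :
    mertT n ≤ Real.log (Real.log n) + mertB := by
  have hlog2 : (0:ℝ) < Real.log 2 := Real.log_pos (by norm_num)
  have hlogn : Real.log 2 ≤ Real.log n := by
    apply Real.log_le_log (by norm_num)
    exact_mod_cast hn
  have hlognpos : (0:ℝ) < Real.log n := lt_of_lt_of_le hlog2 hlogn
  have hlog4 : (0:ℝ) ≤ Real.log 4 := Real.log_nonneg (by norm_num)
  rw [abel_identity n hn]
  have hA1 : mertS n / Real.log n ≤ 1 + Real.log 4 / Real.log 2 := by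
    have h1 : mertS n ≤ Real.log n + Real.log 4 := mertens1 n (by omega)
    calc mertS n / Real.log n ≤ (Real.log n + Real.log 4) / Real.log n := by gcongr
    _ = 1 + Real.log 4 / Real.log n := by field_simp
    _ ≤ 1 + Real.log 4 / Real.log 2 := by gcongr
  have hA2 : ∑ m ∈ Finset.Ico 2 n, mertS m * (1 / Real.log m - 1 / Real.log (m+1))
      ≤ ∑ m ∈ Finset.Ico 2 n,
        ((Real.log (Real.log ((m:ℝ)+1)) - Real.log (Real.log (m:ℝ)))
          + Real.log 4 * (1 / Real.log (m:ℝ) - 1 / Real.log ((m:ℝ)+1))) := by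
    apply Finset.sum_le_sum
    intro m hm
    simp only [Finset.mem_Ico] at hm
    have hm2 : (2:ℝ) ≤ (m:ℝ) := by exact_mod_cast hm.1
    have hu : (0:ℝ) < Real.log m := Real.log_pos (by linarith)
    have hv : (0:ℝ) < Real.log ((m:ℝ)+1) := Real.log_pos (by linarith)
    have huv : Real.log (m:ℝ) ≤ Real.log ((m:ℝ)+1) :=
      Real.log_le_log (by linarith) (by linarith)
    have hdelta : (0:ℝ) ≤ 1 / Real.log m - 1 / Real.log ((m:ℝ)+1) := by
      have := one_div_le_one_div_of_le hu huv
      linarith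
    have hSm : mertS m ≤ Real.log m + Real.log 4 := mertens1 m (by omega)
    have key : Real.log (m:ℝ) * (1 / Real.log m - 1 / Real.log ((m:ℝ)+1))
        ≤ Real.log (Real.log ((m:ℝ)+1)) - Real.log (Real.log (m:ℝ)) := by
      have h1 : Real.log (Real.log (m:ℝ) / Real.log ((m:ℝ)+1)) ≤
          Real.log (m:ℝ) / Real.log ((m:ℝ)+1) - 1 :=
        Real.log_le_sub_one_of_pos (by positivity)
      have h2 : Real.log (Real.log (m:ℝ) / Real.log ((m:ℝ)+1))
          = Real.log (Real.log (m:ℝ)) - Real.log (Real.log ((m:ℝ)+1)) :=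
        Real.log_div (ne_of_gt hu) (ne_of_gt hv)
      have h3 : Real.log (m:ℝ) * (1 / Real.log m - 1 / Real.log ((m:ℝ)+1))
          = 1 - Real.log (m:ℝ) / Real.log ((m:ℝ)+1) := by
        field_simp
      rw [h3]
      rw [h2] at h1
      linarith
    calc mertS m * (1 / Real.log m - 1 / Real.log (m+1))
        ≤ (Real.log m + Real.log 4) * (1 / Real.log m - 1 / Real.log (m+1)) := by
          apply mul_le_mul_of_nonneg_right hSm
          push_cast
          exact hdelta
    _ = Real.log (m:ℝ) * (1 / Real.log (m:ℝ) - 1 / Real.log ((m:ℝ)+1))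
          + Real.log 4 * (1 / Real.log (m:ℝ) - 1 / Real.log ((m:ℝ)+1)) := by push_cast; ring
    _ ≤ (Real.log (Real.log ((m:ℝ)+1)) - Real.log (Real.log (m:ℝ)))
          + Real.log 4 * (1 / Real.log (m:ℝ) - 1 / Real.log ((m:ℝ)+1)) := by
          linarith [key]
  have htel1 : ∑ m ∈ Finset.Ico 2 n,
      (Real.log (Real.log ((m:ℝ)+1)) - Real.log (Real.log (m:ℝ)))
      = Real.log (Real.log n) - Real.log (Real.log 2) := by
    have h := telescope (fun m => -Real.log (Real.log (m:ℝ))) 2 n hn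
    have hc : ∀ m ∈ Finset.Ico 2 n,
        (-Real.log (Real.log (m:ℝ)) - -Real.log (Real.log (((m+1:ℕ)):ℝ)))
        = Real.log (Real.log ((m:ℝ)+1)) - Real.log (Real.log (m:ℝ)) := by
      intro m hm; push_cast; ring
    rw [Finset.sum_congr rfl hc] at h
    rw [h]
    push_cast
    ring
  have htel2 : ∑ m ∈ Finset.Ico 2 n, (1 / Real.log (m:ℝ) - 1 / Real.log ((m:ℝ)+1))
      = 1 / Real.log 2 - 1 / Real.log n := by
    have h := telescope (fun m => 1 / Real.log (m:ℝ)) 2 n hn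
    have hc : ∀ m ∈ Finset.Ico 2 n,
        (1 / Real.log (m:ℝ) - 1 / Real.log (((m+1:ℕ)):ℝ))
        = 1 / Real.log (m:ℝ) - 1 / Real.log ((m:ℝ)+1) := by
      intro m hm; push_cast; ring
    rw [Finset.sum_congr rfl hc] at h
    rw [h]
    push_cast
    ring
  have hsplit : ∑ m ∈ Finset.Ico 2 n,
      ((Real.log (Real.log ((m:ℝ)+1)) - Real.log (Real.log (m:ℝ)))
        + Real.log 4 * (1 / Real.log (m:ℝ) - 1 / Real.log ((m:ℝ)+1)))
      = (Real.log (Real.log n) - Real.log (Real.log 2))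
        + Real.log 4 * (1 / Real.log 2 - 1 / Real.log n) := by
    rw [Finset.sum_add_distrib, htel1, ← Finset.mul_sum, htel2]
  have hfin : Real.log 4 * (1 / Real.log 2 - 1 / Real.log n) ≤ Real.log 4 / Real.log 2 := by
    have h1 : (0:ℝ) < 1 / Real.log n := by positivity
    have h2 : Real.log 4 * (1 / Real.log 2 - 1 / Real.log n)
        ≤ Real.log 4 * (1 / Real.log 2) := by
      apply mul_le_mul_of_nonneg_left _ hlog4
      linarith
    calc Real.log 4 * (1 / Real.log 2 - 1 / Real.log n)
        ≤ Real.log 4 * (1 / Real.log 2) := h2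
    _ = Real.log 4 / Real.log 2 := by ring
  rw [mertB]
  have hA2' := hA2.trans (le_of_eq hsplit)
  linarith

lemma sigma_le_prod (n : ℕ) (hn : n ≠ 0) :
    ((∑ d ∈ n.divisors, d : ℕ) : ℝ) ≤ n * ∏ p ∈ n.primeFactors, (p:ℝ)/((p:ℝ)-1) := by
  have hfact := (ArithmeticFunction.isMultiplicative_sigma (k := 1)).multiplicative_factorization
    _ hn
  have hσ : ((∑ d ∈ n.divisors, d : ℕ) : ℝ)
      = ∏ p ∈ n.primeFactors, ((ArithmeticFunction.sigma 1 (p ^ n.factorization p) : ℕ) : ℝ) := by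
    rw [← ArithmeticFunction.sigma_one_apply, hfact, Finsupp.prod, Nat.support_factorization]
    push_cast
    rfl
  rw [hσ]
  have hbound : ∀ p ∈ n.primeFactors,
      ((ArithmeticFunction.sigma 1 (p ^ n.factorization p) : ℕ) : ℝ)
        ≤ (p:ℝ)^(n.factorization p) * ((p:ℝ)/((p:ℝ)-1)) := by
    intro p hp
    have hpp := Nat.prime_of_mem_primeFactors hp
    have hp2 : (2:ℝ) ≤ (p:ℝ) := by exact_mod_cast hpp.two_le
    rw [ArithmeticFunction.sigma_one_apply_prime_pow hpp]
    push_cast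
    set k := n.factorization p with hk
    have hx1 : (p:ℝ) ≠ 1 := by linarith
    rw [geom_sum_eq hx1]
    have hden : (0:ℝ) < (p:ℝ) - 1 := by linarith
    have h1 : ((p:ℝ)^(k+1) - 1) / ((p:ℝ)-1) ≤ (p:ℝ)^(k+1) / ((p:ℝ)-1) := by
      gcongr
      linarith
    have h2 : (p:ℝ)^(k+1) / ((p:ℝ)-1) = (p:ℝ)^k * ((p:ℝ)/((p:ℝ)-1)) := by
      rw [pow_succ]
      field_simp
    linarith [h1, h2.le, h2.ge]
  calc ∏ p ∈ n.primeFactors, ((ArithmeticFunction.sigma 1 (p ^ n.factorization p) : ℕ) : ℝ)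
      ≤ ∏ p ∈ n.primeFactors, ((p:ℝ)^(n.factorization p) * ((p:ℝ)/((p:ℝ)-1))) :=
        Finset.prod_le_prod (fun p _ => by positivity) hbound
  _ = (∏ p ∈ n.primeFactors, (p:ℝ)^(n.factorization p))
        * ∏ p ∈ n.primeFactors, (p:ℝ)/((p:ℝ)-1) := Finset.prod_mul_distrib
  _ = n * ∏ p ∈ n.primeFactors, (p:ℝ)/((p:ℝ)-1) := by
      congr 1
      have : (∏ p ∈ n.primeFactors, (p:ℝ)^(n.factorization p))
          = (((n.factorization.prod fun p k => p ^ k : ℕ)) : ℝ) := by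
        rw [Finsupp.prod, Nat.support_factorization]
        push_cast
        rfl
      rw [this, Nat.factorization_prod_pow_eq_self hn]

lemma ratio_le_exp (p : ℕ) (hp : 2 ≤ p) :
    (p:ℝ)/((p:ℝ)-1) ≤ Real.exp (1/(p:ℝ) + 2/(p:ℝ)^2) := by
  have hp2 : (2:ℝ) ≤ (p:ℝ) := by exact_mod_cast hp
  have hppos : (0:ℝ) < (p:ℝ) := by linarith
  have h1 : (p:ℝ)/((p:ℝ)-1) ≤ 1 + (1/(p:ℝ) + 2/(p:ℝ)^2) := by
    have key : 1/((p:ℝ)-1) ≤ 1/(p:ℝ) + 2/(p:ℝ)^2 := by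
      rw [div_add_div _ _ (ne_of_gt hppos) (by positivity),
        div_le_div_iff₀ (by linarith) (by positivity)]
      nlinarith
    have hsplit : 1 + 1/((p:ℝ)-1) = (p:ℝ)/((p:ℝ)-1) := by
      rw [one_add_div (by linarith : (p:ℝ)-1 ≠ 0)]
      congr 1
      ring
    linarith
  calc (p:ℝ)/((p:ℝ)-1) ≤ 1 + (1/(p:ℝ) + 2/(p:ℝ)^2) := h1
  _ = (1/(p:ℝ) + 2/(p:ℝ)^2) + 1 := by ring
  _ ≤ Real.exp (1/(p:ℝ) + 2/(p:ℝ)^2) := Real.add_one_le_exp _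

lemma primeFactors_sq_sum (n : ℕ) :
    ∑ p ∈ n.primeFactors, 2/(p:ℝ)^2 ≤ 2 := by
  have hsub : n.primeFactors ⊆ Finset.Ico 2 (n+1) := by
    intro p hp
    simp only [Finset.mem_Ico]
    exact ⟨(Nat.prime_of_mem_primeFactors hp).two_le,
      Nat.lt_succ_of_le (Nat.le_of_mem_primeFactors hp)⟩
  by_cases hn : 2 ≤ n
  · calc ∑ p ∈ n.primeFactors, 2/(p:ℝ)^2 ≤ ∑ m ∈ Finset.Ico 2 (n+1), 2/(m:ℝ)^2 :=
        Finset.sum_le_sum_of_subset_of_nonneg hsub (fun i _ _ => by positivity)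
    _ ≤ ∑ m ∈ Finset.Ico 2 (n+1), (2/((m:ℝ)-1) - 2/(((m+1:ℕ):ℝ)-1)) := by
        apply Finset.sum_le_sum
        intro m hm
        simp only [Finset.mem_Ico] at hm
        have h2 : (2:ℝ) ≤ (m:ℝ) := by exact_mod_cast hm.1
        have hm0 : (m:ℝ) ≠ 0 := by linarith
        have hm1 : (m:ℝ) - 1 ≠ 0 := by linarith
        have heq : 2/((m:ℝ)-1) - 2/(((m+1:ℕ):ℝ)-1) = 2/((m:ℝ)*((m:ℝ)-1)) := by
          push_cast
          have hm1' : (m:ℝ) + 1 - 1 = m := by ring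
          rw [hm1']
          field_simp
          ring
        rw [heq]
        gcongr <;> nlinarith
    _ = 2/(((2:ℕ):ℝ)-1) - 2/(((n+1:ℕ):ℝ)-1) := by
        have h := telescope (fun m => 2/((m:ℝ)-1)) 2 (n+1) (by omega)
        exact h
    _ ≤ 2 := by
        have hn' : (2:ℝ) ≤ (n:ℝ) := by exact_mod_cast hn
        have h1 : (((n+1:ℕ)):ℝ) - 1 = (n:ℝ) := by push_cast; ring
        have h2 : (((2:ℕ)):ℝ) - 1 = 1 := by norm_num
        rw [h1, h2]
        have h3 : (0:ℝ) ≤ 2/(n:ℝ) := by positivity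
        linarith
  · have : n = 0 ∨ n = 1 := by omega
    rcases this with rfl | rfl <;> simp

theorem sigma_max_order :
    ∃ C : ℝ, 0 < C ∧ ∃ N : ℕ, ∀ n : ℕ, N ≤ n →
      ((∑ d ∈ n.divisors, d : ℕ) : ℝ) ≤ C * n * Real.log (Real.log n) := by
  classical
  refine ⟨Real.exp (mertB + 3), Real.exp_pos _, 100, fun n hn => ?_⟩
  have hn0 : n ≠ 0 := by omega
  have hnpos : (0:ℝ) < n := by exact_mod_cast Nat.pos_of_ne_zero hn0
  have hn100 : (100:ℝ) ≤ (n:ℝ) := by exact_mod_cast hn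
  have hexp1 : Real.exp 1 < 2.7182818286 := Real.exp_one_lt_d9
  have hexp3 : Real.exp 3 < 100 := by
    have h : Real.exp 3 = (Real.exp 1)^(3:ℕ) := by
      rw [← Real.exp_nat_mul]
      norm_num
    have h2 : Real.exp 1 ≤ 2.72 := by linarith
    calc Real.exp 3 = (Real.exp 1)^(3:ℕ) := h
    _ ≤ (2.72:ℝ)^(3:ℕ) := pow_le_pow_left₀ (Real.exp_pos 1).le h2 3
    _ < 100 := by norm_num
  have hn3 : (3:ℝ) ≤ Real.log n := by
    rw [Real.le_log_iff_exp_le hnpos]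
    linarith
  set L := Real.log n with hL
  have hLpos : (0:ℝ) < L := by linarith
  set y := ⌊L⌋₊ with hy
  have hy2 : 2 ≤ y := Nat.le_floor (by exact_mod_cast (by linarith : (2:ℝ) ≤ L))
  have hyL : (y:ℝ) ≤ L := Nat.floor_le hLpos.le
  have hy2' : (2:ℝ) ≤ (y:ℝ) := by exact_mod_cast hy2
  have hylog : (0:ℝ) < Real.log y := Real.log_pos (by linarith)
  set P₁ := n.primeFactors.filter (fun p : ℕ => (p:ℝ) ≤ L) with hP₁def
  set P₂ := n.primeFactors.filter (fun p : ℕ => ¬ (p:ℝ) ≤ L) with hP₂def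
  have hsum : ∑ p ∈ P₁, 1/(p:ℝ) + ∑ p ∈ P₂, 1/(p:ℝ)
      = ∑ p ∈ n.primeFactors, (1/(p:ℝ)) :=
    Finset.sum_filter_add_sum_filter_not _ _ _
  have hP₁bound : ∑ p ∈ P₁, 1/(p:ℝ) ≤ mertT y := by
    apply Finset.sum_le_sum_of_subset_of_nonneg
    · intro p hp
      rw [hP₁def, Finset.mem_filter] at hp
      rw [Nat.mem_primesBelow]
      exact ⟨Nat.lt_succ_of_le (Nat.le_floor hp.2), Nat.prime_of_mem_primeFactors hp.1⟩
    · intro i _ _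
      positivity
  have hTy : mertT y ≤ Real.log (Real.log y) + mertB := mertens2 y hy2
  have hP₂bound : ∑ p ∈ P₂, 1/(p:ℝ) ≤ 1 := by
    have hsubP : P₂ ⊆ n.primeFactors := Finset.filter_subset _ _
    have hdvd : (∏ p ∈ P₂, p) ∣ n :=
      (Finset.prod_dvd_prod_of_subset _ _ _ hsubP).trans (Nat.prod_primeFactors_dvd n)
    have hle : ((∏ p ∈ P₂, p : ℕ):ℝ) ≤ (n:ℝ) := by
      exact_mod_cast Nat.le_of_dvd (Nat.pos_of_ne_zero hn0) hdvd
    have hLp : ∀ p ∈ P₂, L ≤ (p:ℝ) := by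
      intro p hp
      rw [hP₂def, Finset.mem_filter] at hp
      linarith [not_le.mp hp.2]
    have hpow : L ^ P₂.card ≤ ((∏ p ∈ P₂, p : ℕ):ℝ) := by
      push_cast
      calc L ^ P₂.card = ∏ _p ∈ P₂, L := (Finset.prod_const L).symm
      _ ≤ ∏ p ∈ P₂, (p:ℝ) := Finset.prod_le_prod (fun _ _ => hLpos.le) hLp
    have hklog : (P₂.card:ℝ) * Real.log L ≤ L := by
      have h1 : Real.log (L ^ P₂.card) ≤ Real.log (n:ℝ) :=
        Real.log_le_log (pow_pos hLpos _) (hpow.trans hle)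
      rw [Real.log_pow] at h1
      exact h1
    have hlogL : (1:ℝ) ≤ Real.log L := by
      rw [Real.le_log_iff_exp_le hLpos]
      have : Real.exp 1 ≤ 3 := by linarith
      linarith
    have hk : (P₂.card:ℝ) ≤ L := by nlinarith [Nat.cast_nonneg (α := ℝ) P₂.card]
    calc ∑ p ∈ P₂, 1/(p:ℝ) ≤ ∑ _p ∈ P₂, 1/L := by
          apply Finset.sum_le_sum
          intro p hp
          exact one_div_le_one_div_of_le hLpos (hLp p hp)
    _ = P₂.card * (1/L) := by rw [Finset.sum_const, nsmul_eq_mul]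
    _ ≤ 1 := by
        rw [mul_one_div]
        exact (div_le_one hLpos).mpr hk
  have hprodexp : ∏ p ∈ n.primeFactors, (p:ℝ)/((p:ℝ)-1)
      ≤ Real.exp (∑ p ∈ n.primeFactors, (1/(p:ℝ) + 2/(p:ℝ)^2)) := by
    rw [Real.exp_sum]
    apply Finset.prod_le_prod
    · intro p hp
      have h2 : (2:ℝ) ≤ (p:ℝ) := by exact_mod_cast (Nat.prime_of_mem_primeFactors hp).two_le
      exact div_nonneg (by linarith) (by linarith)
    · intro p hp
      exact ratio_le_exp p (Nat.prime_of_mem_primeFactors hp).two_le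
  have hsumbound : ∑ p ∈ n.primeFactors, (1/(p:ℝ) + 2/(p:ℝ)^2)
      ≤ Real.log (Real.log y) + mertB + 3 := by
    rw [Finset.sum_add_distrib]
    have hsq := primeFactors_sq_sum n
    have h1 : ∑ p ∈ n.primeFactors, 1/(p:ℝ) ≤ Real.log (Real.log y) + mertB + 1 := by
      rw [← hsum]
      linarith
    linarith
  have hfinal : ((∑ d ∈ n.divisors, d : ℕ) : ℝ)
      ≤ n * Real.exp (Real.log (Real.log y) + mertB + 3) := by
    calc ((∑ d ∈ n.divisors, d : ℕ) : ℝ)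
        ≤ n * ∏ p ∈ n.primeFactors, (p:ℝ)/((p:ℝ)-1) := sigma_le_prod n hn0
    _ ≤ n * Real.exp (∑ p ∈ n.primeFactors, (1/(p:ℝ) + 2/(p:ℝ)^2)) := by
        apply mul_le_mul_of_nonneg_left hprodexp hnpos.le
    _ ≤ n * Real.exp (Real.log (Real.log y) + mertB + 3) := by
        apply mul_le_mul_of_nonneg_left _ hnpos.le
        exact Real.exp_le_exp.mpr hsumbound
  have hexpsplit : Real.exp (Real.log (Real.log y) + mertB + 3)
      = Real.exp (mertB + 3) * Real.log y := by
    rw [show Real.log (Real.log (y:ℝ)) + mertB + 3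
        = (mertB + 3) + Real.log (Real.log (y:ℝ)) by ring,
      Real.exp_add, Real.exp_log hylog]
  have hlogy : Real.log (y:ℝ) ≤ Real.log (Real.log n) := by
    rw [← hL]
    exact Real.log_le_log (by linarith) hyL
  calc ((∑ d ∈ n.divisors, d : ℕ) : ℝ)
      ≤ n * Real.exp (Real.log (Real.log y) + mertB + 3) := hfinal
  _ = n * (Real.exp (mertB + 3) * Real.log y) := by rw [hexpsplit]
  _ ≤ n * (Real.exp (mertB + 3) * Real.log (Real.log n)) := by
      apply mul_le_mul_of_nonneg_left _ hnpos.le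
      apply mul_le_mul_of_nonneg_left hlogy (Real.exp_pos _).le
  _ = Real.exp (mertB + 3) * n * Real.log (Real.log n) := by ring
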